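/- arXiv:0806.3380 — 5 statements merged into one kernel-verified Lean document; each statement's English description precedes it below -/
import Mathlib

section
/- Let H be a full additive subcategory of a triangulated category C which generates C (i.e., C is its own smallest full triangulated subcategory containing H). If w and w' are two weight structures on C whose hearts both contain H, then w = w', i.e., C_{w≤0} = C_{w'≤0} and C_{w≥0} = C_{w'≥0}. -/
open CategoryTheory CategoryTheory.Limits CategoryTheory.Pretriangulated

universe v u

/-- The shift `S[n]` of a class of objects `S`: the objects isomorphic to `A⟦n⟧`
for some `A ∈ S`. -/
def shiftedSet {C : Type u} [Category.{v} C] [HasShift C ℤ] (S : Set C) (n : ℤ) : Set C :=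
  {X | ∃ A ∈ S, Nonempty (X ≅ A⟦n⟧)}

/-- A weight structure on a pretriangulated category `C`, following Bondarko. -/
structure WeightStructure (C : Type u) [Category.{v} C] [Preadditive C] [HasZeroObject C]
    [HasShift C ℤ] [∀ n : ℤ, (shiftFunctor C n).Additive] [Pretriangulated C] where
  /-- the objects of weights `≤ 0` -/
  le : Set C
  /-- the objects of weights `≥ 0` -/
  ge : Set C
  /-- `C_{w ≤ 0}` is closed under retracts -/
  retract_le : ∀ (X M : C) (i : X ⟶ M) (r : M ⟶ X), i ≫ r = 𝟙 X → M ∈ le → X ∈ le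
  /-- `C_{w ≥ 0}` is closed under retracts -/
  retract_ge : ∀ (X M : C) (i : X ⟶ M) (r : M ⟶ X), i ≫ r = 𝟙 X → M ∈ ge → X ∈ ge
  /-- `C_{w ≤ 0} ⊆ C_{w ≤ 1}` -/
  le_shift : le ⊆ shiftedSet le 1
  /-- `C_{w ≥ 1} ⊆ C_{w ≥ 0}` -/
  ge_shift : shiftedSet ge 1 ⊆ ge
  /-- orthogonality -/
  orth : ∀ (M N : C), M ∈ le → N ∈ shiftedSet ge 1 → ∀ f : M ⟶ N, f = 0
  /-- existence of weight filtrations -/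
  exists_wf : ∀ M : C, ∃ (A B : C) (a : A ⟶ M) (b : M ⟶ B) (δ : B ⟶ A⟦(1:ℤ)⟧),
    Triangle.mk a b δ ∈ (distTriang C) ∧ A ∈ le ∧ B ∈ shiftedSet ge 1

namespace WeightStructure

variable {C : Type u} [Category.{v} C] [Preadditive C] [HasZeroObject C]
  [HasShift C ℤ] [∀ n : ℤ, (shiftFunctor C n).Additive] [Pretriangulated C]

/-- `C_{w ≤ n} := C_{w ≤ 0}[n]`. -/
def wLE (w : WeightStructure C) (n : ℤ) : Set C := shiftedSet w.le n

/-- `C_{w ≥ n} := C_{w ≥ 0}[n]`. -/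
def wGE (w : WeightStructure C) (n : ℤ) : Set C := shiftedSet w.ge n

/-- The heart `C_{w = 0} := C_{w ≤ 0} ∩ C_{w ≥ 0}`. -/
def heart (w : WeightStructure C) : Set C := w.le ∩ w.ge

/-- An object `M` is without weights `m, …, n` if it admits a weight filtration
avoiding these weights. -/
def WithoutWeights (w : WeightStructure C) (m n : ℤ) (M : C) : Prop :=
  ∃ (A B : C) (a : A ⟶ M) (b : M ⟶ B) (δ : B ⟶ A⟦(1:ℤ)⟧),
    Triangle.mk a b δ ∈ (distTriang C) ∧ A ∈ w.wLE (m - 1) ∧ B ∈ w.wGE (n + 1)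

end WeightStructure

/-- `H` is a (full) additive subcategory of `C` : it contains the zero objects and is
closed under biproducts (direct sums) taken in `C`. -/
def IsAdditiveSubcategory {C : Type u} [Category.{v} C] [Preadditive C] (H : Set C) : Prop :=
  (∀ X : C, Limits.IsZero X → X ∈ H) ∧
  (∀ (X Y Z : C), X ∈ H → Y ∈ H →
    ∀ (iX : X ⟶ Z) (iY : Y ⟶ Z) (pX : Z ⟶ X) (pY : Z ⟶ Y),
      iX ≫ pX = 𝟙 X → iY ≫ pY = 𝟙 Y → iX ≫ pY = 0 → iY ≫ pX = 0 →
      pX ≫ iX + pY ≫ iY = 𝟙 Z → Z ∈ H)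

/-- The smallest class of objects of `C` containing `H` and closed under isomorphisms,
shifts, and cones of morphisms. -/
inductive IsGenerated {C : Type u} [Category.{v} C] [Preadditive C] [HasZeroObject C]
    [HasShift C ℤ] [∀ n : ℤ, (shiftFunctor C n).Additive] [Pretriangulated C]
    (H : Set C) : C → Prop
  | of {X : C} (hX : X ∈ H) : IsGenerated H X
  | iso {X Y : C} (e : X ≅ Y) (hX : IsGenerated H X) : IsGenerated H Y
  | shift {X : C} (n : ℤ) (hX : IsGenerated H X) : IsGenerated H (X⟦n⟧)
  | cone {X Y Z : C} (f : X ⟶ Y) (g : Y ⟶ Z) (h : Z ⟶ X⟦(1:ℤ)⟧)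
      (hT : Triangle.mk f g h ∈ distTriang C)
      (hX : IsGenerated H X) (hY : IsGenerated H Y) : IsGenerated H Z

/-- `H` generates `C` as a triangulated category. -/
def Generates {C : Type u} [Category.{v} C] [Preadditive C] [HasZeroObject C]
    [HasShift C ℤ] [∀ n : ℤ, (shiftFunctor C n).Additive] [Pretriangulated C]
    (H : Set C) : Prop :=
  ∀ X : C, IsGenerated H X

section Uniqueness

set_option linter.unusedSectionVars false
open ZeroObject

variable {C : Type u} [Category.{v} C] [Preadditive C] [HasZeroObject C]
  [HasShift C ℤ] [∀ n : ℤ, (shiftFunctor C n).Additive] [Pretriangulated C]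

namespace WeightStructure

lemma mem_shiftedSet_of_iso {S : Set C} {X Y : C} (e : X ≅ Y) {n : ℤ}
    (hY : Y ∈ shiftedSet S n) : X ∈ shiftedSet S n := by
  obtain ⟨A, hA, ⟨e'⟩⟩ := hY
  exact ⟨A, hA, ⟨e ≪≫ e'⟩⟩

lemma mem_shiftedSet_self {S : Set C} {X : C} (h : X ∈ S) (m : ℤ) :
    X⟦m⟧ ∈ shiftedSet S m := ⟨X, h, ⟨Iso.refl _⟩⟩

lemma shiftedSet_shift {S : Set C} {X : C} {m : ℤ} (h : X ∈ shiftedSet S m) (k : ℤ) :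
    X⟦k⟧ ∈ shiftedSet S (m + k) := by
  obtain ⟨A, hA, ⟨e⟩⟩ := h
  exact ⟨A, hA, ⟨(shiftFunctor C k).mapIso e ≪≫
    ((shiftFunctorAdd' C m k (m + k) rfl).app A).symm⟩⟩

variable (w : WeightStructure C)

lemma wLE_retract {n : ℤ} {X M : C} (i : X ⟶ M) (r : M ⟶ X)
    (hir : i ≫ r = 𝟙 X) (hM : M ∈ w.wLE n) : X ∈ w.wLE n := by
  obtain ⟨A, hA, ⟨e⟩⟩ := hM
  have e' : M⟦(-n : ℤ)⟧ ≅ A := (shiftFunctor C (-n)).mapIso e ≪≫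
    (shiftFunctorCompIsoId C n (-n) (by ring)).app A
  have hmap : i⟦(-n : ℤ)⟧' ≫ r⟦(-n : ℤ)⟧' = 𝟙 (X⟦(-n : ℤ)⟧) := by
    rw [← Functor.map_comp, hir]; exact (shiftFunctor C (-n)).map_id X
  have hcomp : (i⟦(-n : ℤ)⟧' ≫ e'.hom) ≫ (e'.inv ≫ r⟦(-n : ℤ)⟧') = 𝟙 (X⟦(-n : ℤ)⟧) := by
    simp only [Category.assoc, Iso.hom_inv_id_assoc]; exact hmap
  have hX : X⟦(-n : ℤ)⟧ ∈ w.le := w.retract_le _ _ _ _ hcomp hA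
  exact mem_shiftedSet_of_iso (((shiftFunctorCompIsoId C (-n) n (by ring)).app X).symm)
    (mem_shiftedSet_self hX n)

lemma wGE_retract {n : ℤ} {X M : C} (i : X ⟶ M) (r : M ⟶ X)
    (hir : i ≫ r = 𝟙 X) (hM : M ∈ w.wGE n) : X ∈ w.wGE n := by
  obtain ⟨A, hA, ⟨e⟩⟩ := hM
  have e' : M⟦(-n : ℤ)⟧ ≅ A := (shiftFunctor C (-n)).mapIso e ≪≫
    (shiftFunctorCompIsoId C n (-n) (by ring)).app A
  have hmap : i⟦(-n : ℤ)⟧' ≫ r⟦(-n : ℤ)⟧' = 𝟙 (X⟦(-n : ℤ)⟧) := by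
    rw [← Functor.map_comp, hir]; exact (shiftFunctor C (-n)).map_id X
  have hcomp : (i⟦(-n : ℤ)⟧' ≫ e'.hom) ≫ (e'.inv ≫ r⟦(-n : ℤ)⟧') = 𝟙 (X⟦(-n : ℤ)⟧) := by
    simp only [Category.assoc, Iso.hom_inv_id_assoc]; exact hmap
  have hX : X⟦(-n : ℤ)⟧ ∈ w.ge := w.retract_ge _ _ _ _ hcomp hA
  exact mem_shiftedSet_of_iso (((shiftFunctorCompIsoId C (-n) n (by ring)).app X).symm)
    (mem_shiftedSet_self hX n)

lemma zero_wLE (n : ℤ) : (0 : C) ∈ w.wLE n := by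
  obtain ⟨A, B, a, b, δ, _, hA, _⟩ := w.exists_wf (0 : C)
  exact w.wLE_retract (0 : (0 : C) ⟶ A⟦n⟧) 0 (by simp) (mem_shiftedSet_self hA n)

lemma zero_wGE (n : ℤ) : (0 : C) ∈ w.wGE n := by
  obtain ⟨A, B, a, b, δ, _, _, hB⟩ := w.exists_wf (0 : C)
  obtain ⟨B₀, hB₀, _⟩ := hB
  exact w.wGE_retract (0 : (0 : C) ⟶ B₀⟦n⟧) 0 (by simp) (mem_shiftedSet_self hB₀ n)

lemma wLE_succ (m : ℤ) : w.wLE m ⊆ w.wLE (m + 1) := by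
  rintro X ⟨A, hA, ⟨e⟩⟩
  obtain ⟨A', hA', ⟨e'⟩⟩ := w.le_shift hA
  exact ⟨A', hA', ⟨e ≪≫ (shiftFunctor C m).mapIso e' ≪≫
    ((shiftFunctorAdd' C 1 m (m + 1) (by ring)).app A').symm⟩⟩

lemma wGE_succ (m : ℤ) : w.wGE (m + 1) ⊆ w.wGE m := by
  rintro X ⟨A, hA, ⟨e⟩⟩
  refine ⟨A⟦(1 : ℤ)⟧, w.ge_shift (mem_shiftedSet_self hA 1), ⟨e ≪≫ ?_⟩⟩
  exact (shiftFunctorAdd' C 1 m (m + 1) (by ring)).app A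

lemma wLE_mono {m n : ℤ} (h : m ≤ n) : w.wLE m ⊆ w.wLE n := by
  obtain ⟨d, rfl⟩ : ∃ d : ℕ, n = m + d := ⟨(n - m).toNat, by omega⟩
  clear h
  induction d with
  | zero => simpa using subset_rfl
  | succ d ih =>
    have hd : m + ((d : ℤ) + 1) = (m + d) + 1 := by ring
    rw [show ((d + 1 : ℕ) : ℤ) = (d : ℤ) + 1 by push_cast; ring, hd]
    exact ih.trans (w.wLE_succ _)

lemma wGE_anti {m n : ℤ} (h : m ≤ n) : w.wGE n ⊆ w.wGE m := by
  obtain ⟨d, rfl⟩ : ∃ d : ℕ, n = m + d := ⟨(n - m).toNat, by omega⟩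
  clear h
  induction d with
  | zero => simpa using subset_rfl
  | succ d ih =>
    have hd : m + ((d : ℤ) + 1) = (m + d) + 1 := by ring
    rw [show ((d + 1 : ℕ) : ℤ) = (d : ℤ) + 1 by push_cast; ring, hd]
    exact (w.wGE_succ _).trans ih

lemma orthGen {m m' : ℤ} (h : m < m') {X Y : C} (hX : X ∈ w.wLE m) (hY : Y ∈ w.wGE m')
    (f : X ⟶ Y) : f = 0 := by
  have hY' : Y ∈ w.wGE (m + 1) := w.wGE_anti (by omega) hY
  obtain ⟨A, hA, ⟨e⟩⟩ := hX
  obtain ⟨B, hB, ⟨e'⟩⟩ := hY'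
  have hf : f = e.hom ≫ (e.inv ≫ f ≫ e'.hom) ≫ e'.inv := by simp
  rw [hf]
  set g : A⟦m⟧ ⟶ B⟦m + 1⟧ := e.inv ≫ f ≫ e'.hom with hg
  have φ := (shiftFunctorAdd' C 1 m (m + 1) (by ring)).app B
  set g' : A⟦m⟧ ⟶ (B⟦(1 : ℤ)⟧)⟦m⟧ := g ≫ φ.hom with hg'
  set ψ : A ⟶ B⟦(1 : ℤ)⟧ := (shiftFunctor C m).preimage g' with hψ
  have hψ0 : ψ = 0 := w.orth A (B⟦(1 : ℤ)⟧) hA ⟨B, hB, ⟨Iso.refl _⟩⟩ ψ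
  have : g' = 0 := by
    rw [← (shiftFunctor C m).map_preimage g', ← hψ, hψ0, Functor.map_zero]
  have hgz : g = 0 := by
    have := congrArg (fun t => t ≫ φ.inv) this
    simpa [hg'] using this
  rw [hgz, zero_comp, comp_zero]

/-- transport of a distinguished triangle along an isomorphism of the middle object -/
lemma dist_iso₂ {T : Triangle C} (hT : T ∈ distTriang C) {M : C} (e : T.obj₂ ≅ M) :
    Triangle.mk (T.mor₁ ≫ e.hom) (e.inv ≫ T.mor₂) T.mor₃ ∈ distTriang C := by
  refine isomorphic_distinguished _ hT _ ?_
  refine Triangle.isoMk _ _ (Iso.refl _) e.symm (Iso.refl _) ?_ ?_ ?_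
  · dsimp; exact (Category.assoc _ _ _).trans ((congrArg (T.mor₁ ≫ ·) e.hom_inv_id).trans ((Category.comp_id _).trans (Category.id_comp _).symm))
  · dsimp; exact Category.comp_id _
  · dsimp; exact ((congrArg (T.mor₃ ≫ ·) ((shiftFunctor C 1).map_id _)).trans (Category.comp_id _)).trans (Category.id_comp _).symm

lemma exists_dec (X : C) (n : ℤ) :
    ∃ (A B : C) (f : A ⟶ X) (g : X ⟶ B) (h : B ⟶ A⟦(1 : ℤ)⟧),
      Triangle.mk f g h ∈ (distTriang C) ∧ A ∈ w.wLE n ∧ B ∈ w.wGE (n + 1) := by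
  obtain ⟨A, B, a, b, δ, hT, hA, hB⟩ := w.exists_wf (X⟦(-n : ℤ)⟧)
  have hT' := Pretriangulated.Triangle.shift_distinguished _ hT n
  set T' := (CategoryTheory.shiftFunctor (Triangle C) n).obj (Triangle.mk a b δ) with hT'def
  have e : T'.obj₂ ≅ X := (shiftFunctorCompIsoId C (-n) n (by ring)).app X
  have hD := dist_iso₂ hT' e
  refine ⟨A⟦n⟧, B⟦n⟧, T'.mor₁ ≫ e.hom, e.inv ≫ T'.mor₂, T'.mor₃, hD, ?_, ?_⟩
  · exact mem_shiftedSet_self hA n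
  · have := shiftedSet_shift hB n
    rwa [show (1 : ℤ) + n = n + 1 by ring] at this

lemma wGE_of_forall {X : C} {n : ℤ} (h : ∀ Q ∈ w.wLE n, ∀ f : Q ⟶ X, f = 0) :
    X ∈ w.wGE (n + 1) := by
  obtain ⟨A, B, a, b, δ, hT, hA, hB⟩ := w.exists_dec X n
  obtain ⟨r, hr⟩ := Pretriangulated.Triangle.yoneda_exact₂ _ hT (𝟙 X)
    (by show a ≫ 𝟙 X = 0; rw [h A hA a, zero_comp])
  exact w.wGE_retract b r hr.symm hB

lemma wLE_of_forall {X : C} {n : ℤ} (h : ∀ N ∈ w.wGE (n + 1), ∀ f : X ⟶ N, f = 0) :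
    X ∈ w.wLE n := by
  obtain ⟨A, B, a, b, δ, hT, hA, hB⟩ := w.exists_dec X n
  obtain ⟨s, hs⟩ := Pretriangulated.Triangle.coyoneda_exact₂ _ hT (𝟙 X)
    (by show 𝟙 X ≫ b = 0; rw [h B hB b, comp_zero])
  exact w.wLE_retract s a hs.symm hA

lemma wLE_ext {T : Triangle C} (hT : T ∈ distTriang C) {n : ℤ}
    (h₁ : T.obj₁ ∈ w.wLE n) (h₃ : T.obj₃ ∈ w.wLE n) : T.obj₂ ∈ w.wLE n := by
  apply w.wLE_of_forall
  intro N hN φ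
  obtain ⟨ψ, hψ⟩ := Pretriangulated.Triangle.yoneda_exact₂ _ hT φ
    (w.orthGen (by omega) h₁ hN _)
  rw [hψ, w.orthGen (by omega) h₃ hN ψ, comp_zero]

lemma mem_le_iff {X : C} : X ∈ w.le ↔ X ∈ w.wLE 0 := by
  constructor
  · intro h
    exact ⟨X, h, ⟨((shiftFunctorZero C ℤ).app X).symm⟩⟩
  · rintro ⟨A, hA, ⟨e⟩⟩
    have e' : X ≅ A := e ≪≫ (shiftFunctorZero C ℤ).app A
    exact w.retract_le _ _ e'.hom e'.inv (by simp) hA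

lemma mem_ge_iff {X : C} : X ∈ w.ge ↔ X ∈ w.wGE 0 := by
  constructor
  · intro h
    exact ⟨X, h, ⟨((shiftFunctorZero C ℤ).app X).symm⟩⟩
  · rintro ⟨A, hA, ⟨e⟩⟩
    have e' : X ≅ A := e ≪≫ (shiftFunctorZero C ℤ).app A
    exact w.retract_ge _ _ e'.hom e'.inv (by simp) hA

section ExactHelpers

variable {P₀ Q₀ R₀ W : C} {f : P₀ ⟶ Q₀} {g : Q₀ ⟶ R₀} {h : R₀ ⟶ P₀⟦(1 : ℤ)⟧}

lemma ex₂ (hT : Triangle.mk f g h ∈ distTriang C) (u : W ⟶ Q₀) (hu : u ≫ g = 0) :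
    ∃ v : W ⟶ P₀, u = v ≫ f :=
  Pretriangulated.Triangle.coyoneda_exact₂ _ hT u hu

lemma ex₃ (hT : Triangle.mk f g h ∈ distTriang C) (u : W ⟶ R₀) (hu : u ≫ h = 0) :
    ∃ v : W ⟶ Q₀, u = v ≫ g :=
  Pretriangulated.Triangle.coyoneda_exact₃ _ hT u hu

lemma ex₁ (hT : Triangle.mk f g h ∈ distTriang C) (u : W ⟶ P₀⟦(1 : ℤ)⟧)
    (hu : u ≫ f⟦(1 : ℤ)⟧' = 0) : ∃ v : W ⟶ R₀, u = v ≫ h :=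
  Pretriangulated.Triangle.coyoneda_exact₁ _ hT u hu

lemma ex₂' (hT : Triangle.mk f g h ∈ distTriang C) (u : W ⟶ Q₀⟦(1 : ℤ)⟧)
    (hu : u ≫ g⟦(1 : ℤ)⟧' = 0) : ∃ v : W ⟶ P₀⟦(1 : ℤ)⟧, u = v ≫ f⟦(1 : ℤ)⟧' := by
  obtain ⟨v, hv⟩ := Pretriangulated.Triangle.coyoneda_exact₁ _ (rot_of_distTriang _ hT) u hu
  have hv' : u = v ≫ (-f⟦(1 : ℤ)⟧') := hv
  exact ⟨-v, by rw [hv']; exact (Preadditive.comp_neg _ _).trans (Preadditive.neg_comp _ _).symm⟩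

lemma ex₃' (hT : Triangle.mk f g h ∈ distTriang C) (u : W ⟶ R₀⟦(1 : ℤ)⟧)
    (hu : u ≫ h⟦(1 : ℤ)⟧' = 0) : ∃ v : W ⟶ Q₀⟦(1 : ℤ)⟧, u = v ≫ g⟦(1 : ℤ)⟧' := by
  obtain ⟨v, hv⟩ := Pretriangulated.Triangle.coyoneda_exact₁ _
    (rot_of_distTriang _ (rot_of_distTriang _ hT)) u hu
  have hv' : u = v ≫ (-g⟦(1 : ℤ)⟧') := hv
  exact ⟨-v, by rw [hv']; exact (Preadditive.comp_neg _ _).trans (Preadditive.neg_comp _ _).symm⟩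

lemma ex₁' (hT : Triangle.mk f g h ∈ distTriang C) (u : W ⟶ (P₀⟦(1 : ℤ)⟧)⟦(1 : ℤ)⟧)
    (hu : u ≫ (f⟦(1 : ℤ)⟧')⟦(1 : ℤ)⟧' = 0) :
    ∃ v : W ⟶ R₀⟦(1 : ℤ)⟧, u = v ≫ h⟦(1 : ℤ)⟧' := by
  obtain ⟨v, hv⟩ := Pretriangulated.Triangle.coyoneda_exact₁ _
    (rot_of_distTriang _ (rot_of_distTriang _ (rot_of_distTriang _ hT))) u
    (by show u ≫ (-f⟦(1 : ℤ)⟧')⟦(1 : ℤ)⟧' = 0; rw [Functor.map_neg]; simp [hu])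
  have hv' : u = v ≫ (-h⟦(1 : ℤ)⟧') := hv
  exact ⟨-v, by rw [hv']; exact (Preadditive.comp_neg _ _).trans (Preadditive.neg_comp _ _).symm⟩

end ExactHelpers

/-- The key diagram chase: given compatible weight decompositions of the outer objects of a
distinguished triangle, every map from `Q` to the "cone" `BZ` of the induced map on negative
parts vanishes, provided maps from `Q` to `BY` and to `BX⟦1⟧` vanish. -/
lemma chase
    {Q X' Y' Z' AX AY AZ BX BY BZ : C}
    {f₁ : X' ⟶ Y'} {g₁ : Y' ⟶ Z'} {h₁ : Z' ⟶ X'⟦(1 : ℤ)⟧}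
    (hTk : Triangle.mk f₁ g₁ h₁ ∈ distTriang C)
    {a : AX ⟶ X'} {b : X' ⟶ BX} {c : BX ⟶ AX⟦(1 : ℤ)⟧}
    (hX : Triangle.mk a b c ∈ distTriang C)
    {a' : AY ⟶ Y'} {b' : Y' ⟶ BY} {c' : BY ⟶ AY⟦(1 : ℤ)⟧}
    (hY : Triangle.mk a' b' c' ∈ distTriang C)
    {ft : AX ⟶ AY} {j : AY ⟶ AZ} {d : AZ ⟶ AX⟦(1 : ℤ)⟧}
    (hE : Triangle.mk ft j d ∈ distTriang C)
    (sq : ft ≫ a' = a ≫ f₁)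
    {ζ : AZ ⟶ Z'} {β : Z' ⟶ BZ} {γ : BZ ⟶ AZ⟦(1 : ℤ)⟧}
    (hF : Triangle.mk ζ β γ ∈ distTriang C)
    (R10 : j ≫ ζ = a' ≫ g₁) (R11 : d ≫ a⟦(1 : ℤ)⟧' = ζ ≫ h₁)
    (V1 : ∀ φ : Q ⟶ BY, φ = 0) (V2 : ∀ φ : Q ⟶ BX⟦(1 : ℤ)⟧, φ = 0)
    (q : Q ⟶ BZ) : q = 0 := by
  have z31F : γ ≫ ζ⟦(1 : ℤ)⟧' = 0 := comp_distTriang_mor_zero₃₁ _ hF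
  have z12F : ζ ≫ β = 0 := comp_distTriang_mor_zero₁₂ _ hF
  have z12E : ft ≫ j = 0 := comp_distTriang_mor_zero₁₂ _ hE
  have z31T : h₁ ≫ f₁⟦(1 : ℤ)⟧' = 0 := comp_distTriang_mor_zero₃₁ _ hTk
  -- step 1 : the component `q ≫ γ` vanishes
  have h2 : (q ≫ γ) ≫ ζ⟦(1 : ℤ)⟧' = 0 := by
    rw [Category.assoc, z31F, comp_zero]
  have h3 : (q ≫ γ) ≫ d⟦(1 : ℤ)⟧' = 0 := by
    have h3a : ((q ≫ γ) ≫ d⟦(1 : ℤ)⟧') ≫ (a⟦(1 : ℤ)⟧')⟦(1 : ℤ)⟧' = 0 := by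
      rw [Category.assoc, ← Functor.map_comp, R11, Functor.map_comp, ← Category.assoc, h2,
        zero_comp]
    obtain ⟨t, ht⟩ := ex₁' hX _ h3a
    have ht' : (q ≫ γ) ≫ d⟦(1 : ℤ)⟧' = t ≫ c⟦(1 : ℤ)⟧' := ht
    rw [ht', V2 t, zero_comp]
  obtain ⟨σ, hσ₀⟩ := ex₃' hE (q ≫ γ) h3
  have hσ : q ≫ γ = σ ≫ j⟦(1 : ℤ)⟧' := hσ₀
  have h6 : (σ ≫ a'⟦(1 : ℤ)⟧') ≫ g₁⟦(1 : ℤ)⟧' = 0 := by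
    rw [Category.assoc, ← Functor.map_comp, ← R10, Functor.map_comp, ← Category.assoc, ← hσ, h2]
  obtain ⟨ρ, hρ₀⟩ := ex₂' hTk _ h6
  have hρ : σ ≫ a'⟦(1 : ℤ)⟧' = ρ ≫ f₁⟦(1 : ℤ)⟧' := hρ₀
  obtain ⟨ρ', hρ'₀⟩ := ex₂' hX ρ (V2 _)
  have hρ' : ρ = ρ' ≫ a⟦(1 : ℤ)⟧' := hρ'₀
  have h8 : (σ - ρ' ≫ ft⟦(1 : ℤ)⟧') ≫ a'⟦(1 : ℤ)⟧' = 0 := by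
    rw [Preadditive.sub_comp, Category.assoc, ← Functor.map_comp, sq, Functor.map_comp, ← Category.assoc,
      ← hρ', ← hρ, sub_self]
  obtain ⟨τ, hτ₀⟩ := ex₁ hY _ h8
  have hτ : σ - ρ' ≫ ft⟦(1 : ℤ)⟧' = τ ≫ c' := hτ₀
  have hσ' : σ = ρ' ≫ ft⟦(1 : ℤ)⟧' := by
    rw [V1 τ, zero_comp] at hτ
    exact sub_eq_zero.mp hτ
  have h9 : q ≫ γ = 0 := by
    rw [hσ, hσ', Category.assoc, ← Functor.map_comp, z12E, Functor.map_zero, comp_zero]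
  -- step 2 : lift q to Z' and kill it there
  obtain ⟨w, hw₀⟩ := ex₃ hF q h9
  have hw : q = w ≫ β := hw₀
  obtain ⟨ρ'', hρ''₀⟩ := ex₂' hX (w ≫ h₁) (V2 _)
  have hρ'' : w ≫ h₁ = ρ'' ≫ a⟦(1 : ℤ)⟧' := hρ''₀
  have h11b : ρ'' ≫ ft⟦(1 : ℤ)⟧' = 0 := by
    have h11a : (ρ'' ≫ ft⟦(1 : ℤ)⟧') ≫ a'⟦(1 : ℤ)⟧' = 0 := by
      rw [Category.assoc, ← Functor.map_comp, sq, Functor.map_comp, ← Category.assoc, ← hρ'',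
        Category.assoc, z31T, comp_zero]
    obtain ⟨τ', hτ'₀⟩ := ex₁ hY _ h11a
    have hτ' : ρ'' ≫ ft⟦(1 : ℤ)⟧' = τ' ≫ c' := hτ'₀
    rw [hτ', V1 τ', zero_comp]
  obtain ⟨χ, hχ₀⟩ := ex₁ hE ρ'' h11b
  have hχ : ρ'' = χ ≫ d := hχ₀
  have h12 : (w - χ ≫ ζ) ≫ h₁ = 0 := by
    rw [Preadditive.sub_comp, Category.assoc, ← R11, ← Category.assoc, ← hχ, ← hρ'', sub_self]
  obtain ⟨v', hv'₀⟩ := ex₃ hTk _ h12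
  have hv' : w - χ ≫ ζ = v' ≫ g₁ := hv'₀
  obtain ⟨v'', hv''₀⟩ := ex₂ hY v' (V1 _)
  have hv'' : v' = v'' ≫ a' := hv''₀
  have hwdec : w = χ ≫ ζ + v'' ≫ (j ≫ ζ) := by
    rw [R10, ← Category.assoc, ← hv'', ← hv']; abel
  rw [hw, hwdec]
  simp only [Preadditive.add_comp, Category.assoc, z12F, comp_zero, add_zero, zero_add]

/-- Main induction: every object generated by `H` admits, for every `k` and `n`, a weight
decomposition of its `k`-th shift which works simultaneously for both weight structures. -/
lemma main_dec {H : Set C} (w w' : WeightStructure C) (hw : H ⊆ w.heart) (hw' : H ⊆ w'.heart)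
    {T : C} (hT : IsGenerated H T) :
    ∀ k n : ℤ, ∃ (A B : C) (f : A ⟶ T⟦k⟧) (g : T⟦k⟧ ⟶ B) (h : B ⟶ A⟦(1 : ℤ)⟧),
      Triangle.mk f g h ∈ (distTriang C) ∧ A ∈ w.wLE n ∧ A ∈ w'.wLE n ∧
      B ∈ w.wGE (n + 1) ∧ B ∈ w'.wGE (n + 1) := by
  induction hT with
  | @of X hX =>
    intro k n
    by_cases hk : k ≤ n
    · refine ⟨X⟦k⟧, 0, 𝟙 _, 0, 0, Pretriangulated.contractible_distinguished _, ?_, ?_, ?_, ?_⟩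
      · exact w.wLE_mono hk (mem_shiftedSet_self (hw hX).1 k)
      · exact w'.wLE_mono hk (mem_shiftedSet_self (hw' hX).1 k)
      · exact w.zero_wGE _
      · exact w'.zero_wGE _
    · refine ⟨0, X⟦k⟧, 0, 𝟙 _, 0, Pretriangulated.contractible_distinguished₁ _,
        w.zero_wLE _, w'.zero_wLE _, ?_, ?_⟩
      · exact w.wGE_anti (by omega) (mem_shiftedSet_self (hw hX).2 k)
      · exact w'.wGE_anti (by omega) (mem_shiftedSet_self (hw' hX).2 k)
  | @iso X Y e hX ih =>
    intro k n
    obtain ⟨A, B, f, g, h, hD, h1, h2, h3, h4⟩ := ih k n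
    exact ⟨A, B, _, _, _, dist_iso₂ hD ((shiftFunctor C k).mapIso e), h1, h2, h3, h4⟩
  | @shift X m hX ih =>
    intro k n
    obtain ⟨A, B, f, g, h, hD, h1, h2, h3, h4⟩ := ih (m + k) n
    exact ⟨A, B, _, _, _, dist_iso₂ hD ((shiftFunctorAdd' C m k (m + k) rfl).app X),
      h1, h2, h3, h4⟩
  | @cone X Y Z f g h hTri hX hY ihX ihY =>
    intro k n
    have hTk0 := Pretriangulated.Triangle.shift_distinguished _ hTri k
    set TS := (CategoryTheory.shiftFunctor (Triangle C) k).obj (Triangle.mk f g h) with hTSdef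
    have hTk : Triangle.mk TS.mor₁ TS.mor₂ TS.mor₃ ∈ distTriang C := hTk0
    obtain ⟨AX, BX, a, b, c, hXd, hAXw, hAXw', hBXw0, hBXw0'⟩ := ihX k (n - 1)
    obtain ⟨AY, BY, a', b', c', hYd, hAYw, hAYw', hBYw, hBYw'⟩ := ihY k n
    have hBXw : BX ∈ w.wGE n := by rwa [show n - 1 + 1 = n by ring] at hBXw0
    have hBXw' : BX ∈ w'.wGE n := by rwa [show n - 1 + 1 = n by ring] at hBXw0'
    -- lift of the first map to the negative parts
    have hlift0 : (a ≫ TS.mor₁) ≫ b' = 0 := w.orthGen (by omega) hAXw hBYw _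
    obtain ⟨ft, hft⟩ := ex₂ hYd _ hlift0
    obtain ⟨AZ, j, d, hEd⟩ := Pretriangulated.distinguished_cocone_triangle ft
    obtain ⟨ζ, hζ₁, hζ₂⟩ := Pretriangulated.complete_distinguished_triangle_morphism
      (Triangle.mk ft j d) (Triangle.mk TS.mor₁ TS.mor₂ TS.mor₃) hEd hTk a a' hft.symm
    obtain ⟨BZ, β, γ, hFd⟩ := Pretriangulated.distinguished_cocone_triangle ζ
    have hAX1w : AX⟦(1 : ℤ)⟧ ∈ w.wLE n := by
      have := shiftedSet_shift hAXw 1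
      rwa [show n - 1 + 1 = n by ring] at this
    have hAX1w' : AX⟦(1 : ℤ)⟧ ∈ w'.wLE n := by
      have := shiftedSet_shift hAXw' 1
      rwa [show n - 1 + 1 = n by ring] at this
    have hBX1w : BX⟦(1 : ℤ)⟧ ∈ w.wGE (n + 1) := shiftedSet_shift hBXw 1
    have hBX1w' : BX⟦(1 : ℤ)⟧ ∈ w'.wGE (n + 1) := shiftedSet_shift hBXw' 1
    refine ⟨AZ, BZ, ζ, β, γ, hFd, ?_, ?_, ?_, ?_⟩
    · exact w.wLE_ext (Pretriangulated.rot_of_distTriang _ hEd) hAYw hAX1w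
    · exact w'.wLE_ext (Pretriangulated.rot_of_distTriang _ hEd) hAYw' hAX1w'
    · apply w.wGE_of_forall
      intro Q hQ q
      exact chase hTk hXd hYd hEd hft.symm hFd hζ₁ hζ₂
        (fun φ => w.orthGen (by omega) hQ hBYw φ)
        (fun φ => w.orthGen (by omega) hQ hBX1w φ) q
    · apply w'.wGE_of_forall
      intro Q hQ q
      exact chase hTk hXd hYd hEd hft.symm hFd hζ₁ hζ₂
        (fun φ => w'.orthGen (by omega) hQ hBYw' φ)
        (fun φ => w'.orthGen (by omega) hQ hBX1w' φ) q

lemma le_ge_subset {H : Set C} (hgen : Generates H) (w w' : WeightStructure C)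
    (hw : H ⊆ w.heart) (hw' : H ⊆ w'.heart) : w.le ⊆ w'.le ∧ w.ge ⊆ w'.ge := by
  constructor
  · intro X hX
    obtain ⟨A, B, f, g, h, hD, hAw, hAw', hBw, hBw'⟩ := main_dec w w' hw hw' (hgen X) 0 0
    have hX0 : X⟦(0 : ℤ)⟧ ∈ w.wLE 0 :=
      mem_shiftedSet_of_iso ((shiftFunctorZero C ℤ).app X) ((w.mem_le_iff).1 hX)
    have hg : g = 0 := w.orthGen (by omega) hX0 hBw g
    obtain ⟨s, hs⟩ := ex₂ hD (𝟙 (X⟦(0 : ℤ)⟧)) (by rw [hg, comp_zero])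
    have hXA : X⟦(0 : ℤ)⟧ ∈ w'.wLE 0 := w'.wLE_retract s f hs.symm hAw'
    exact (w'.mem_le_iff).2
      (mem_shiftedSet_of_iso ((shiftFunctorZero C ℤ).app X).symm hXA)
  · intro X hX
    obtain ⟨A, B, f, g, h, hD, hAw, hAw', hBw, hBw'⟩ := main_dec w w' hw hw' (hgen X) 0 (-1)
    have hBw2' : B ∈ w'.wGE 0 := by rwa [show (-1 : ℤ) + 1 = 0 by ring] at hBw'
    have hX0 : X⟦(0 : ℤ)⟧ ∈ w.wGE 0 :=
      mem_shiftedSet_of_iso ((shiftFunctorZero C ℤ).app X) ((w.mem_ge_iff).1 hX)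
    have hf : f = 0 := w.orthGen (by omega) hAw hX0 f
    obtain ⟨r, hr₀⟩ := Pretriangulated.Triangle.yoneda_exact₂ _ hD (𝟙 (X⟦(0 : ℤ)⟧))
      (by show f ≫ _ = 0; rw [hf, zero_comp])
    have hr : 𝟙 (X⟦(0 : ℤ)⟧) = g ≫ r := hr₀
    have hXB : X⟦(0 : ℤ)⟧ ∈ w'.wGE 0 := w'.wGE_retract g r hr.symm hBw2'
    exact (w'.mem_ge_iff).2
      (mem_shiftedSet_of_iso ((shiftFunctorZero C ℤ).app X).symm hXB)

end WeightStructure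

end Uniqueness
/-- If `H` is a full additive subcategory generating the triangulated category `C`, then
any two weight structures on `C` whose hearts contain `H` coincide. -/
theorem weightStructure_unique_of_heart_subset
    {C : Type u} [Category.{v} C] [Preadditive C] [HasZeroObject C]
    [HasShift C ℤ] [∀ n : ℤ, (shiftFunctor C n).Additive] [Pretriangulated C]
    (H : Set C) (hadd : IsAdditiveSubcategory H) (hgen : Generates H)
    (w w' : WeightStructure C)
    (hw : H ⊆ w.heart) (hw' : H ⊆ w'.heart) :
    w.le = w'.le ∧ w.ge = w'.ge := by
  obtain ⟨h1, h2⟩ := WeightStructure.le_ge_subset hgen w w' hw hw'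
  obtain ⟨h1', h2'⟩ := WeightStructure.le_ge_subset hgen w' w hw' hw
  exact ⟨Set.Subset.antisymm h1 h1', Set.Subset.antisymm h2 h2'⟩
end

section
/- Let H be a full additive subcategory of a triangulated category C which generates C. Then the following are equivalent: (i) there exists a weight structure on C whose heart contains H; (ii) H is negative, i.e., Hom_C(A, B[i]) = 0 for any two objects A, B of H and any integer i > 0. -/
open CategoryTheory CategoryTheory.Limits CategoryTheory.Pretriangulated

universe v u

namespace BWAux

open CategoryTheory.Category ZeroObject

variable {C : Type u} [Category.{v} C] [Preadditive C] [HasZeroObject C]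
  [HasShift C ℤ] [∀ n : ℤ, (shiftFunctor C n).Additive] [Pretriangulated C]

/-- The class of "weights ≤ 0" objects generated by `H`. -/
inductive L (H : Set C) : C → Prop
  | of {A : C} (hA : A ∈ H) : L H A
  | shiftNeg {X : C} (hX : L H X) : L H (X⟦(-1:ℤ)⟧)
  | iso {X Y : C} (e : X ≅ Y) (hX : L H X) : L H Y
  | retract {X M : C} (i : X ⟶ M) (r : M ⟶ X) (hir : i ≫ r = 𝟙 X) (hM : L H M) : L H X
  | ext {X E Y : C} (u : X ⟶ E) (v : E ⟶ Y) (d : Y ⟶ X⟦(1:ℤ)⟧)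
      (hT : Triangle.mk u v d ∈ distTriang C) (hX : L H X) (hY : L H Y) : L H E

/-- The class of "weights ≥ 0" objects: right orthogonal condition. -/
def geSet (H : Set C) : Set C := {N | ∀ P, L H P → ∀ f : P ⟶ N⟦(1:ℤ)⟧, f = 0}

lemma cancel_iso_zero {X Y Z : C} (f : X ⟶ Y) (e : Y ≅ Z) (h : f ≫ e.hom = 0) : f = 0 := by
  rw [← comp_id f, ← e.hom_inv_id, ← assoc, h, zero_comp]

lemma cancel_iso_zero' {X Y Z : C} (f : Y ⟶ Z) (e : X ≅ Y) (h : e.hom ≫ f = 0) : f = 0 := by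
  rw [← id_comp f, ← e.inv_hom_id, assoc, h, comp_zero]

lemma negLemma {H : Set C}
    (hneg : ∀ A B : C, A ∈ H → B ∈ H → ∀ i : ℤ, 0 < i → ∀ f : A ⟶ B⟦i⟧, f = 0) :
    ∀ P : C, L H P → ∀ B ∈ H, ∀ k : ℤ, 1 ≤ k → ∀ f : P ⟶ B⟦k⟧, f = 0 := by
  intro P hP
  induction hP with
  | of hA => exact fun B hB k hk f => hneg _ _ hA hB k (by omega) f
  | @shiftNeg X hX ih =>
      intro B hB k hk f
      have hg : ((shiftFunctorCompIsoId C (-1:ℤ) (1:ℤ) (neg_add_cancel 1)).inv.app X ≫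
          f⟦(1:ℤ)⟧' ≫ (shiftFunctorAdd' C k 1 (k+1) rfl).inv.app B) = 0 :=
        ih B hB (k+1) (by omega) _
      have h2 : f⟦(1:ℤ)⟧' = 0 := by
        have := congrArg (fun q => (shiftFunctorCompIsoId C (-1:ℤ) (1:ℤ)
          (neg_add_cancel 1)).hom.app X ≫ q ≫ (shiftFunctorAdd' C k 1 (k+1) rfl).hom.app B) hg
        simpa using this
      exact (shiftFunctor C (1:ℤ)).map_injective (by rw [h2, Functor.map_zero])
  | iso e hX ih =>
      intro B hB k hk f
      exact cancel_iso_zero' f e (ih B hB k hk _)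
  | retract i r hir hM ih =>
      intro B hB k hk f
      rw [← id_comp f, ← hir, assoc, ih B hB k hk (r ≫ f), comp_zero]
  | ext u v d hT hX hY ihX ihY =>
      intro B hB k hk f
      obtain ⟨q, hq⟩ := Triangle.yoneda_exact₂ _ hT f (ihX B hB k hk _)
      rw [hq, ihY B hB k hk q]
      exact comp_zero


set_option linter.unusedSectionVars false

variable {H : Set C}

/-- Lifting property of a weight-truncation map. -/
def Surj (H : Set C) {A M : C} (a : A ⟶ M) : Prop :=
  ∀ P, L H P → ∀ f : P ⟶ M, ∃ g : P ⟶ A, g ≫ a = f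

/-- Injectivity property of a weight-truncation map, at shift 1. -/
def Inj (H : Set C) {A M : C} (a : A ⟶ M) : Prop :=
  ∀ P, L H P → ∀ h : P ⟶ A⟦(1:ℤ)⟧, h ≫ a⟦(1:ℤ)⟧' = 0 → h = 0

def GoodObj (H : Set C) (M : C) : Prop :=
  ∃ (A : C) (a : A ⟶ M), L H A ∧ Surj H a ∧ Inj H a

lemma shift_surj {A F : C} {a : A ⟶ F} (hs : Surj H a) {P : C} (hP : L H P)
    (f : P ⟶ F⟦(1:ℤ)⟧) : ∃ s : P ⟶ A⟦(1:ℤ)⟧, s ≫ a⟦(1:ℤ)⟧' = f := by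
  obtain ⟨g, hg⟩ := hs (P⟦(-1:ℤ)⟧) (L.shiftNeg hP)
    (f⟦(-1:ℤ)⟧' ≫ (shiftFunctorCompIsoId C (1:ℤ) (-1:ℤ) (add_neg_cancel 1)).hom.app F)
  refine ⟨(shiftFunctorCompIsoId C (-1:ℤ) (1:ℤ) (neg_add_cancel 1)).inv.app P ≫ g⟦(1:ℤ)⟧', ?_⟩
  rw [assoc, ← Functor.map_comp, hg, Functor.map_comp,
    shift_shiftFunctorCompIsoId_hom_app (1:ℤ) (-1:ℤ) (add_neg_cancel 1) F]
  have hnat := (shiftFunctorCompIsoId C (-1:ℤ) (1:ℤ) (neg_add_cancel 1)).hom.naturality f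
  dsimp at hnat
  rw [hnat, Iso.inv_hom_id_app_assoc]

lemma goodObj_iso {M M' : C} (e : M ≅ M') (hM : GoodObj H M) : GoodObj H M' := by
  obtain ⟨A, a, hA, hs, hi⟩ := hM
  refine ⟨A, a ≫ e.hom, hA, ?_, ?_⟩
  · intro P hP f
    obtain ⟨g, hg⟩ := hs P hP (f ≫ e.inv)
    exact ⟨g, by rw [← assoc, hg, assoc, e.inv_hom_id, comp_id]⟩
  · intro P hP h hh
    apply hi P hP
    rw [Functor.map_comp, ← assoc] at hh
    exact cancel_iso_zero _ ((shiftFunctor C (1:ℤ)).mapIso e) hh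

lemma goodObj₂ (T : Triangle C) (hT : T ∈ distTriang C)
    (h₁ : GoodObj H T.obj₁) (h₃ : GoodObj H T.obj₃) : GoodObj H T.obj₂ := by
  obtain ⟨A₁, a₁, hA₁, surj₁, inj₁⟩ := h₁
  obtain ⟨A₃, a₃, hA₃, surj₃, inj₃⟩ := h₃
  obtain ⟨s, hs⟩ := shift_surj surj₁ hA₃ (a₃ ≫ T.mor₃)
  obtain ⟨A₂, i, p, hTA⟩ := distinguished_cocone_triangle₂ s
  obtain ⟨m, hm₁, hm₂⟩ : ∃ m : A₂ ⟶ T.obj₂, i ≫ m = a₁ ≫ T.mor₁ ∧ p ≫ a₃ = m ≫ T.mor₂ :=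
    complete_distinguished_triangle_morphism₂
    (Triangle.mk i p s) T hTA hT a₁ a₃ hs
  refine ⟨A₂, m, L.ext i p s hTA hA₁ hA₃, ?_, ?_⟩
  · intro P hP f
    obtain ⟨g₃, hg₃⟩ := surj₃ P hP (f ≫ T.mor₂)
    have hψ : g₃ ≫ s = 0 := by
      apply inj₁ P hP
      rw [assoc, hs, ← assoc, hg₃, assoc, comp_distTriang_mor_zero₂₃ T hT, comp_zero]
    obtain ⟨g', hg'⟩ : ∃ g' : P ⟶ A₂, g₃ = g' ≫ p := Triangle.coyoneda_exact₃ _ hTA g₃ hψ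
    obtain ⟨e, he⟩ := Triangle.coyoneda_exact₂ T hT (f - g' ≫ m)
      (by rw [Preadditive.sub_comp, assoc, ← hm₂, ← assoc, ← hg', hg₃, sub_self])
    obtain ⟨g₁, hg₁⟩ := surj₁ P hP e
    refine ⟨g' + g₁ ≫ i, ?_⟩
    rw [Preadditive.add_comp, assoc, hm₁, ← assoc, hg₁, ← he]
    abel
  · intro P hP g hg
    have hgp : g ≫ p⟦(1:ℤ)⟧' = 0 := by
      apply inj₃ P hP
      rw [assoc, ← Functor.map_comp, hm₂, Functor.map_comp, ← assoc, hg, zero_comp]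
    obtain ⟨h, hh⟩ : ∃ h : P ⟶ A₁⟦(1:ℤ)⟧, g = h ≫ (-i⟦(1:ℤ)⟧') :=
      Triangle.coyoneda_exact₁ _ (rot_of_distTriang _ hTA) g hgp
    have hgi : h ≫ i⟦(1:ℤ)⟧' = -g := by rw [hh, Preadditive.comp_neg, neg_neg]
    obtain ⟨e, he⟩ := Triangle.coyoneda_exact₁ T hT (h ≫ a₁⟦(1:ℤ)⟧') (by
      rw [assoc, ← Functor.map_comp, ← hm₁, Functor.map_comp, ← assoc, hgi,
        Preadditive.neg_comp, hg, neg_zero])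
    obtain ⟨t, ht⟩ := surj₃ P hP e
    have hts : h = t ≫ s := by
      have h0 : (h - t ≫ s) ≫ a₁⟦(1:ℤ)⟧' = 0 := by
        rw [Preadditive.sub_comp, he, assoc, hs, ← assoc, ht, sub_self]
      have := inj₁ P hP _ h0
      rwa [sub_eq_zero] at this
    have hsi : s ≫ i⟦(1:ℤ)⟧' = 0 := comp_distTriang_mor_zero₃₁ _ hTA
    rw [← neg_neg g, ← hgi, hts, assoc, hsi, comp_zero, neg_zero]

lemma L_shift_nonpos {X : C} (hX : L H X) : ∀ n : ℤ, n ≤ 0 → L H (X⟦n⟧) := by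
  have key : ∀ m : ℕ, L H (X⟦-(m:ℤ)⟧) := by
    intro m
    induction m with
    | zero =>
        refine L.iso ?_ hX
        have h0 : (-((0:ℕ):ℤ)) = 0 := by simp
        rw [h0]
        exact (shiftFunctorZero C ℤ).symm.app X
    | succ k ihk =>
        refine L.iso ?_ (L.shiftNeg ihk)
        exact ((shiftFunctorAdd' C (-(k:ℤ)) (-1) (-((k+1:ℕ):ℤ)) (by push_cast; ring)).app X).symm
  intro n hn
  obtain ⟨m, rfl⟩ : ∃ m : ℕ, n = -(m:ℤ) := ⟨(-n).toNat, by omega⟩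
  exact key m


lemma goodObj_of_isGenerated {H : Set C} (hH0 : ∀ X : C, IsZero X → X ∈ H)
    (hneg : ∀ A B : C, A ∈ H → B ∈ H → ∀ i : ℤ, 0 < i → ∀ f : A ⟶ B⟦i⟧, f = 0)
    {M : C} (hM : IsGenerated H M) : ∀ n : ℤ, GoodObj H (M⟦n⟧) := by
  induction hM with
  | of hX =>
      intro n
      rcases le_or_gt n 0 with hn | hn
      · exact ⟨_, 𝟙 _, L_shift_nonpos (L.of hX) n hn, fun P hP f => ⟨f, comp_id f⟩,
          fun P hP h hh => by simpa using hh⟩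
      · refine ⟨0, 0, L.of (hH0 0 (isZero_zero C)), ?_, ?_⟩
        · intro P hP f
          refine ⟨0, ?_⟩
          rw [negLemma hneg P hP _ hX n (by omega) f]
          exact comp_zero
        · intro P hP h _
          exact (Functor.map_isZero _ (isZero_zero C)).eq_of_tgt h 0
  | iso e _ ih => exact fun n => goodObj_iso ((shiftFunctor C n).mapIso e) (ih n)
  | @shift X k _ ih =>
      exact fun n => goodObj_iso ((shiftFunctorAdd' C k n (k+n) rfl).app X) (ih (k+n))
  | @cone X Y Z u v w hT _ _ ihX ihY =>
      intro n
      have hTS := Pretriangulated.Triangle.shift_distinguished _ hT n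
      refine goodObj₂ (((Pretriangulated.Triangle.shiftFunctor C n).obj
        (Triangle.mk u v w)).rotate) (rot_of_distTriang _ hTS) ?_ ?_
      · exact ihY n
      · exact goodObj_iso ((shiftFunctorAdd' C n 1 (n+1) rfl).app X) (ihX (n+1))

lemma goodObj_dec {H : Set C} {M : C} (hM : GoodObj H M) :
    ∃ (A B : C) (a : A ⟶ M) (b : M ⟶ B) (δ : B ⟶ A⟦(1:ℤ)⟧),
      Triangle.mk a b δ ∈ (distTriang C) ∧ (L H A ∧ B ∈ shiftedSet (geSet H) 1) := by
  obtain ⟨A, a, hA, hs, hi⟩ := hM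
  obtain ⟨B, b, δ, hT⟩ := distinguished_cocone_triangle a
  have hB : ∀ P, L H P → ∀ f : P ⟶ B, f = 0 := by
    intro P hP f
    have h31 : δ ≫ a⟦(1:ℤ)⟧' = 0 := comp_distTriang_mor_zero₃₁ _ hT
    have h12 : a ≫ b = 0 := comp_distTriang_mor_zero₁₂ _ hT
    have h1 : (f ≫ δ) ≫ a⟦(1:ℤ)⟧' = 0 := by rw [assoc, h31, comp_zero]
    have h2 : f ≫ δ = 0 := hi P hP _ h1
    obtain ⟨e, he⟩ := Triangle.coyoneda_exact₃ _ hT f h2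
    obtain ⟨g, hg⟩ := hs P hP e
    calc f = e ≫ b := he
    _ = (g ≫ a) ≫ b := by rw [hg]; rfl
    _ = 0 := by rw [assoc, h12, comp_zero]
  refine ⟨A, B, a, b, δ, hT, hA, ⟨B⟦(-1:ℤ)⟧, ?_,
    ⟨((shiftFunctorCompIsoId C (-1:ℤ) (1:ℤ) (neg_add_cancel 1)).app B).symm⟩⟩⟩
  intro P hP f
  exact cancel_iso_zero f ((shiftFunctorCompIsoId C (-1:ℤ) (1:ℤ) (neg_add_cancel 1)).app B)
    (hB P hP _)

end BWAux


/-- If `H` is a full additive subcategory generating the triangulated category `C`, then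
there exists a weight structure whose heart contains `H` if and only if `H` is negative. -/
theorem exists_weightStructure_iff_negative
    {C : Type u} [Category.{v} C] [Preadditive C] [HasZeroObject C]
    [HasShift C ℤ] [∀ n : ℤ, (shiftFunctor C n).Additive] [Pretriangulated C]
    (H : Set C) (hadd : IsAdditiveSubcategory H) (hgen : Generates H) :
    (∃ w : WeightStructure C, H ⊆ w.heart) ↔
      (∀ A B : C, A ∈ H → B ∈ H → ∀ i : ℤ, 0 < i → ∀ f : A ⟶ B⟦i⟧, f = 0) := by
  constructor
  · rintro ⟨w, hw⟩ A B hA hB i hi f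
    have hBge : ∀ m : ℕ, B⟦(m:ℤ)⟧ ∈ w.ge := by
      intro m
      induction m with
      | zero =>
          have e := (shiftFunctorZero C ℤ).app B
          rw [Nat.cast_zero]
          exact w.retract_ge _ _ e.hom e.inv e.hom_inv_id (hw hB).2
      | succ k ih =>
          have h1 : B⟦(k:ℤ)⟧⟦(1:ℤ)⟧ ∈ w.ge := w.ge_shift ⟨B⟦(k:ℤ)⟧, ih, ⟨Iso.refl _⟩⟩
          have e := (shiftFunctorAdd' C (k:ℤ) 1 (((k+1:ℕ)):ℤ) (by push_cast; ring)).app B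
          exact w.retract_ge _ _ e.hom e.inv e.hom_inv_id h1
    have hmem : B⟦i⟧ ∈ shiftedSet w.ge 1 := by
      refine ⟨B⟦i-1⟧, ?_, ⟨(shiftFunctorAdd' C (i-1) 1 i (by ring)).app B⟩⟩
      obtain ⟨m, hm⟩ : ∃ m : ℕ, i - 1 = (m:ℤ) := ⟨(i-1).toNat, by omega⟩
      rw [hm]
      exact hBge m
    exact w.orth A _ (hw hA).1 hmem f
  · intro hneg
    refine ⟨{
      le := BWAux.L H
      ge := BWAux.geSet H
      retract_le := fun X M i r hir hM => BWAux.L.retract i r hir hM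
      retract_ge := by
        intro X M i r hir hM P hP f
        have h2 : f ≫ i⟦(1:ℤ)⟧' = 0 := hM P hP _
        have h3 : f = (f ≫ i⟦(1:ℤ)⟧') ≫ r⟦(1:ℤ)⟧' := by
          rw [Category.assoc, ← Functor.map_comp, hir, CategoryTheory.Functor.map_id, Category.comp_id]
        rw [h3, h2, zero_comp]
      le_shift := fun X hX => ⟨X⟦(-1:ℤ)⟧, BWAux.L.shiftNeg hX,
        ⟨((shiftFunctorCompIsoId C (-1:ℤ) (1:ℤ) (neg_add_cancel 1)).app X).symm⟩⟩
      ge_shift := by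
        rintro N ⟨N', hN', ⟨e⟩⟩ P hP f
        have h1 : (f ≫ e.hom⟦(1:ℤ)⟧')⟦(-1:ℤ)⟧' ≫ (shiftFunctorCompIsoId C (1:ℤ) (-1:ℤ)
            (add_neg_cancel 1)).hom.app (N'⟦(1:ℤ)⟧) = 0 := hN' _ (BWAux.L.shiftNeg hP) _
        have h2 : f ≫ e.hom⟦(1:ℤ)⟧' = 0 := (shiftFunctor C (-1:ℤ)).map_injective (by
          rw [BWAux.cancel_iso_zero _ ((shiftFunctorCompIsoId C (1:ℤ) (-1:ℤ)
            (add_neg_cancel 1)).app (N'⟦(1:ℤ)⟧)) h1, Functor.map_zero])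
        exact BWAux.cancel_iso_zero _ ((shiftFunctor C (1:ℤ)).mapIso e) h2
      orth := by
        rintro M N hM ⟨N', hN', ⟨e⟩⟩ f
        exact BWAux.cancel_iso_zero f e (hN' M hM (f ≫ e.hom))
      exists_wf := fun M => BWAux.goodObj_dec (BWAux.goodObj_iso
        ((shiftFunctorZero C ℤ).app M)
        (BWAux.goodObj_of_isGenerated hadd.1 hneg (hgen M) 0)) }, ?_⟩
    intro A hA
    exact ⟨BWAux.L.of hA, fun P hP f => BWAux.negLemma hneg P hP A hA 1 le_rfl f⟩
end

section
/- Let C be a triangulated category with a weight structure w, and let m ≤ n be integers. Suppose M and N are objects of C admitting weight filtrations M_{≤m-1} →x_- M →x_+ M_{≥n+1} → M_{≤m-1}[1] and N_{≤m-1} →y_- N →y_+ N_{≥n+1} → N_{≤m-1}[1] avoiding weights m,…,n. Then every morphism α : M → N in C extends uniquely to a morphism of triangles: there exist unique morphisms β : M_{≤m-1} → N_{≤m-1} and γ : M_{≥n+1} → N_{≥n+1} with α ∘ x_- = y_- ∘ β and γ ∘ x_+ = y_+ ∘ α, and moreover (β, α, γ) commutes with the connecting morphisms of the two triangles. -/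
open CategoryTheory CategoryTheory.Limits CategoryTheory.Pretriangulated

universe v u

section Aux

variable {C : Type u} [Category.{v} C] [Preadditive C] [HasZeroObject C]
  [HasShift C ℤ] [∀ n : ℤ, (shiftFunctor C n).Additive] [Pretriangulated C]

lemma shiftedSet_iso_closed {S : Set C} {a : ℤ} {X Y : C} (e : X ≅ Y)
    (hY : Y ∈ shiftedSet S a) : X ∈ shiftedSet S a := by
  obtain ⟨A, hA, ⟨e'⟩⟩ := hY
  exact ⟨A, hA, ⟨e ≪≫ e'⟩⟩

lemma shiftedSet_shift {S : Set C} {a : ℤ} {X : C} (hX : X ∈ shiftedSet S a) (b : ℤ) :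
    X⟦b⟧ ∈ shiftedSet S (a + b) := by
  obtain ⟨A, hA, ⟨e⟩⟩ := hX
  exact ⟨A, hA, ⟨(shiftFunctor C b).mapIso e ≪≫
    ((shiftFunctorAdd' C a b (a + b) rfl).app A).symm⟩⟩

namespace WeightStructure

variable (w : WeightStructure C)

lemma le_iso_closed {X Y : C} (e : X ≅ Y) (hY : Y ∈ w.le) : X ∈ w.le :=
  w.retract_le X Y e.hom e.inv e.hom_inv_id hY

lemma ge_iso_closed {X Y : C} (e : X ≅ Y) (hY : Y ∈ w.ge) : X ∈ w.ge :=
  w.retract_ge X Y e.hom e.inv e.hom_inv_id hY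

lemma le_shift_neg_one {X : C} (hX : X ∈ w.le) : X⟦(-1 : ℤ)⟧ ∈ w.le := by
  obtain ⟨A, hA, ⟨e⟩⟩ := w.le_shift hX
  refine w.le_iso_closed ((shiftFunctor C (-1 : ℤ)).mapIso e ≪≫
    ((shiftFunctorAdd' C (1 : ℤ) (-1) 0 (by ring)).app A).symm ≪≫
    (shiftFunctorZero C ℤ).app A) hA

lemma ge_shift_one {X : C} (hX : X ∈ w.ge) : X⟦(1 : ℤ)⟧ ∈ w.ge :=
  w.ge_shift ⟨X, hX, ⟨Iso.refl _⟩⟩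

lemma le_shift_nonpos {X : C} (hX : X ∈ w.le) : ∀ j : ℤ, j ≤ 0 → X⟦j⟧ ∈ w.le := by
  refine Int.le_induction_down ?_ ?_
  · exact w.le_iso_closed ((shiftFunctorZero C ℤ).app X) hX
  · intro k _ ih
    exact w.le_iso_closed
      (((shiftFunctorAdd' C k (-1) (k - 1) (by ring)).app X))
      (w.le_shift_neg_one ih)

lemma ge_shift_nonneg {X : C} (hX : X ∈ w.ge) : ∀ j : ℤ, 0 ≤ j → X⟦j⟧ ∈ w.ge := by
  refine Int.le_induction ?_ ?_
  · exact w.ge_iso_closed ((shiftFunctorZero C ℤ).app X) hX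
  · intro k _ ih
    exact w.ge_iso_closed
      (((shiftFunctorAdd' C k 1 (k + 1) rfl).app X))
      (w.ge_shift_one ih)

lemma mem_le_of_wLE {X : C} {a : ℤ} (hX : X ∈ w.wLE a) (ha : a ≤ 0) : X ∈ w.le := by
  obtain ⟨A, hA, ⟨e⟩⟩ := hX
  exact w.le_iso_closed e (w.le_shift_nonpos hA a ha)

lemma mem_ge_shift_of_wGE {X : C} {b : ℤ} (hX : X ∈ w.wGE b) (hb : 1 ≤ b) :
    X ∈ shiftedSet w.ge 1 := by
  obtain ⟨B, hB, ⟨e⟩⟩ := hX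
  refine ⟨B⟦b - 1⟧, w.ge_shift_nonneg hB (b - 1) (by omega), ⟨e ≪≫ ?_⟩⟩
  exact (shiftFunctorAdd' C (b - 1) 1 b (by ring)).app B

/-- Orthogonality: there are no nonzero maps from weights `≤ a` to weights `≥ b` when
`a < b`. -/
lemma hom_zero {a b : ℤ} (h : a < b) {X Y : C} (hX : X ∈ w.wLE a) (hY : Y ∈ w.wGE b)
    (f : X ⟶ Y) : f = 0 := by
  apply (shiftFunctor C (-a)).map_injective
  rw [Functor.map_zero]
  refine w.orth _ _ ?_ ?_ _
  · have := shiftedSet_shift hX (-a)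
    rw [add_neg_cancel] at this
    exact w.mem_le_of_wLE this le_rfl
  · have := shiftedSet_shift hY (-a)
    exact w.mem_ge_shift_of_wGE this (by omega)

end WeightStructure

end Aux

/-- Functoriality of weight filtrations avoiding weights `m, …, n`: any morphism `M ⟶ N`
extends uniquely to a morphism of the corresponding exact triangles. -/
theorem weightFiltration_functorial
    {C : Type u} [Category.{v} C] [Preadditive C] [HasZeroObject C]
    [HasShift C ℤ] [∀ n : ℤ, (shiftFunctor C n).Additive] [Pretriangulated C]
    (w : WeightStructure C) (m n : ℤ) (hmn : m ≤ n)
    (M N MA MB NA NB : C)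
    (xm : MA ⟶ M) (xp : M ⟶ MB) (dM : MB ⟶ MA⟦(1:ℤ)⟧)
    (hM : Triangle.mk xm xp dM ∈ distTriang C)
    (hMA : MA ∈ w.wLE (m - 1)) (hMB : MB ∈ w.wGE (n + 1))
    (ym : NA ⟶ N) (yp : N ⟶ NB) (dN : NB ⟶ NA⟦(1:ℤ)⟧)
    (hN : Triangle.mk ym yp dN ∈ distTriang C)
    (hNA : NA ∈ w.wLE (m - 1)) (hNB : NB ∈ w.wGE (n + 1))
    (α : M ⟶ N) :
    ∃! p : (MA ⟶ NA) × (MB ⟶ NB),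
      xm ≫ α = p.1 ≫ ym ∧ xp ≫ p.2 = α ≫ yp ∧
        dM ≫ (shiftFunctor C (1:ℤ)).map p.1 = p.2 ≫ dN := by
  -- `MA⟦1⟧ ∈ C_{w ≤ m}` and `NB⟦-1⟧ ∈ C_{w ≥ n}`
  have hMA1 : MA⟦(1:ℤ)⟧ ∈ w.wLE m := by
    have := shiftedSet_shift hMA 1
    rwa [show m - 1 + 1 = m by ring] at this
  have hNB1 : NB⟦(-1:ℤ)⟧ ∈ w.wGE n := by
    have := shiftedSet_shift hNB (-1)
    rwa [show n + 1 + -1 = n by ring] at this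
  -- existence of `β`
  have hzero : (xm ≫ α) ≫ yp = 0 := by
    rw [Category.assoc]
    exact w.hom_zero (a := m - 1) (b := n + 1) (by omega) hMA hNB _
  obtain ⟨β, hβ⟩ : ∃ β : MA ⟶ NA, xm ≫ α = β ≫ ym :=
    Triangle.coyoneda_exact₂ _ hN (xm ≫ α) hzero
  -- complete to a morphism of triangles
  obtain ⟨γ, hγ₁, hγ₂⟩ : ∃ γ : MB ⟶ NB,
      xp ≫ γ = α ≫ yp ∧ dM ≫ (shiftFunctor C (1:ℤ)).map β = γ ≫ dN :=
    complete_distinguished_triangle_morphism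
      (Triangle.mk xm xp dM) (Triangle.mk ym yp dN) hM hN β α hβ
  refine ⟨⟨β, γ⟩, ⟨hβ, hγ₁, hγ₂⟩, ?_⟩
  rintro ⟨β', γ'⟩ ⟨h1, h2, h3⟩
  have hβ' : β' = β := by
    have hsub : (β' - β) ≫ (Triangle.mk ym yp dN).invRotate.mor₂ = 0 := by
      show (β' - β) ≫ ym = 0
      rw [Preadditive.sub_comp, ← h1, ← hβ, sub_self]
    obtain ⟨g, hg⟩ : ∃ g : MA ⟶ NB⟦(-1:ℤ)⟧,
        β' - β = g ≫ (Triangle.mk ym yp dN).invRotate.mor₁ :=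
      Triangle.coyoneda_exact₂ _ (inv_rot_of_distTriang _ hN) (β' - β) hsub
    have hg0 : g = 0 := w.hom_zero (a := m - 1) (b := n) (by omega) hMA hNB1 g
    replace hg : β' - β = 0 := hg.trans (by rw [hg0]; exact zero_comp)
    exact sub_eq_zero.mp hg
  have hγ' : γ' = γ := by
    have hsub : xp ≫ (γ' - γ) = 0 := by
      rw [Preadditive.comp_sub, h2, hγ₁, sub_self]
    obtain ⟨g, hg⟩ : ∃ g : MA⟦(1:ℤ)⟧ ⟶ NB, γ' - γ = dM ≫ g :=
      Triangle.yoneda_exact₃ _ hM (γ' - γ) hsub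
    have hg0 : g = 0 := w.hom_zero (a := m) (b := n + 1) (by omega) hMA1 hNB g
    rw [hg0, comp_zero] at hg
    exact sub_eq_zero.mp hg
  simp [hβ', hγ']
end

section
/- Let C be a triangulated category with a weight structure w. Suppose M ∈ C_{w≤0} admits a weight filtration M_{≤-2} → M →π M_{≥0} → M_{≤-2}[1] avoiding weight -1 (i.e., M_{≤-2} ∈ C_{w≤-2} and M_{≥0} ∈ C_{w≥0}). Then: (i) M_{≥0} belongs to the heart C_{w=0}; (ii) for every object N of the heart C_{w=0}, precomposition with π induces a bijection Hom_C(M_{≥0}, N) → Hom_C(M, N). (Thus M ↦ M_{≥0} =: Gr_0 M is left adjoint to the inclusion of the heart into the full subcategory of objects of non-positive weights without weight -1.) -/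
open CategoryTheory CategoryTheory.Limits CategoryTheory.Pretriangulated

universe v u

namespace WeightStructure

variable {C : Type u} [Category.{v} C] [Preadditive C] [HasZeroObject C]
  [HasShift C ℤ] [∀ n : ℤ, (shiftFunctor C n).Additive] [Pretriangulated C]

lemma mem_le_of_iso' (w : WeightStructure C) {X Y : C} (e : X ≅ Y) (hY : Y ∈ w.le) : X ∈ w.le :=
  w.retract_le X Y e.hom e.inv e.hom_inv_id hY

lemma shift_neg_one_mem_le' (w : WeightStructure C) {X : C} (hX : X ∈ w.le) :
    X⟦(-1:ℤ)⟧ ∈ w.le := by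
  obtain ⟨B, hB, ⟨e⟩⟩ := w.le_shift hX
  exact w.mem_le_of_iso'
    ((shiftFunctor C (-1:ℤ)).mapIso e ≪≫ (shiftFunctorCompIsoId C (1:ℤ) (-1:ℤ) (by ring)).app B) hB

lemma zero_of_shift_neg_one' (w : WeightStructure C) {A' N : C} (hA' : A' ∈ w.le)
    (hN : N ∈ w.ge) (f : A'⟦(-1:ℤ)⟧ ⟶ N) : f = 0 := by
  set e := (shiftFunctorCompIsoId C (-1:ℤ) (1:ℤ) (by ring)).app A' with he
  have h0 : e.inv ≫ f⟦(1:ℤ)⟧' = 0 := w.orth _ _ hA' ⟨N, hN, ⟨Iso.refl _⟩⟩ _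
  have h1 : f⟦(1:ℤ)⟧' = e.hom ≫ (e.inv ≫ f⟦(1:ℤ)⟧') := by simp
  rw [h0, comp_zero] at h1
  exact (shiftFunctor C (1:ℤ)).map_injective (by rw [h1, Functor.map_zero])

lemma zero_of_mem_shift_neg_one' (w : WeightStructure C) {X N : C}
    (hX : X ∈ shiftedSet w.le (-1)) (hN : N ∈ w.ge) (f : X ⟶ N) : f = 0 := by
  obtain ⟨A', hA', ⟨e⟩⟩ := hX
  have h := w.zero_of_shift_neg_one' hA' hN (e.inv ≫ f)
  have : f = e.hom ≫ (e.inv ≫ f) := by simp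
  rw [h, comp_zero] at this
  exact this

lemma ext_le' (w : WeightStructure C) {T : Triangle C} (hT : T ∈ distTriang C)
    (h1 : T.obj₁ ∈ w.le) (h3 : T.obj₃ ∈ w.le) : T.obj₂ ∈ w.le := by
  obtain ⟨A₀, B₀, a₀, b₀, δ₀, hT₀, hA₀, hB₀⟩ := w.exists_wf T.obj₂
  have h1b : T.mor₁ ≫ b₀ = 0 := w.orth _ _ h1 hB₀ _
  obtain ⟨c, hc⟩ := Triangle.yoneda_exact₂ T hT b₀ h1b
  have hc0 : c = 0 := w.orth _ _ h3 hB₀ c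
  have hb₀ : b₀ = 0 := by rw [hc, hc0, comp_zero]
  obtain ⟨s, hs⟩ := Triangle.coyoneda_exact₂ _ hT₀ (𝟙 T.obj₂)
    (by change 𝟙 T.obj₂ ≫ b₀ = 0; rw [hb₀, comp_zero])
  exact w.retract_le _ _ s a₀ hs.symm hA₀

end WeightStructure

/-- For `M` of weights `≤ 0` admitting a weight filtration avoiding weight `-1`, the
weight-zero quotient `Gr₀ M := M_{≥ 0}` lies in the heart and is universal among morphisms
from `M` to objects of the heart. -/
theorem gr0_left_adjoint
    {C : Type u} [Category.{v} C] [Preadditive C] [HasZeroObject C]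
    [HasShift C ℤ] [∀ n : ℤ, (shiftFunctor C n).Additive] [Pretriangulated C]
    (w : WeightStructure C) (M : C) (hM : M ∈ w.le)
    (A G : C) (a : A ⟶ M) (π : M ⟶ G) (δ : G ⟶ A⟦(1:ℤ)⟧)
    (hT : Triangle.mk a π δ ∈ distTriang C)
    (hA : A ∈ w.wLE (-2)) (hG : G ∈ w.ge) :
    G ∈ w.heart ∧
      ∀ N : C, N ∈ w.heart → Function.Bijective (fun g : G ⟶ N => π ≫ g) := by
  obtain ⟨A', hA', ⟨eA⟩⟩ := hA
  -- `A⟦1⟧ ≅ A'⟦-1⟧`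
  have eA1 : A⟦(1:ℤ)⟧ ≅ A'⟦(-1:ℤ)⟧ :=
    (shiftFunctor C (1:ℤ)).mapIso eA ≪≫
      ((shiftFunctorAdd' C (-2:ℤ) (1:ℤ) (-1:ℤ) (by ring)).app A').symm
  have hA1 : A⟦(1:ℤ)⟧ ∈ shiftedSet w.le (-1) := ⟨A', hA', ⟨eA1⟩⟩
  have hAneg : A ∈ shiftedSet w.le (-1) := by
    refine ⟨A'⟦(-1:ℤ)⟧, w.shift_neg_one_mem_le' hA', ⟨?_⟩⟩
    exact eA ≪≫ (shiftFunctorAdd' C (-1:ℤ) (-1:ℤ) (-2:ℤ) (by ring)).app A'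
  have hGle : G ∈ w.le := by
    have := w.ext_le' (rot_of_distTriang _ hT) (T := (Triangle.mk a π δ).rotate)
      hM (w.mem_le_of_iso' eA1 (w.shift_neg_one_mem_le' hA'))
    exact this
  refine ⟨⟨hGle, hG⟩, fun N hN => ⟨?_, ?_⟩⟩
  · -- injectivity
    intro g₁ g₂ h
    have hsub : π ≫ (g₁ - g₂) = 0 := by
      simp only [Preadditive.comp_sub]
      rw [show π ≫ g₁ = π ≫ g₂ from h, sub_self]
    obtain ⟨h', hh'⟩ := Triangle.yoneda_exact₃ _ hT (g₁ - g₂) hsub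
    have : h' = 0 := w.zero_of_mem_shift_neg_one' hA1 hN.2 h'
    rw [this, comp_zero] at hh'
    exact sub_eq_zero.mp hh'
  · -- surjectivity
    intro f
    have haf : a ≫ f = 0 := w.zero_of_mem_shift_neg_one' hAneg hN.2 _
    obtain ⟨g, hg⟩ := Triangle.yoneda_exact₂ _ hT f haf
    exact ⟨g, hg.symm⟩
end

section
/- Let C be a triangulated category with a weight structure w. Suppose M ∈ C_{w≥0} admits a weight filtration M_{≤0} →ι M → M_{≥2} → M_{≤0}[1] avoiding weight 1 (i.e., M_{≤0} ∈ C_{w≤0} and M_{≥2} ∈ C_{w≥2}). Then: (i) M_{≤0} belongs to the heart C_{w=0}; (ii) for every object N of the heart C_{w=0}, postcomposition with ι induces a bijection Hom_C(N, M_{≤0}) → Hom_C(N, M). (Thus M ↦ M_{≤0} =: Gr_0 M is right adjoint to the inclusion of the heart into the full subcategory of objects of non-negative weights without weight 1.) -/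
open CategoryTheory CategoryTheory.Limits CategoryTheory.Pretriangulated

universe v u

section Aux

variable {C : Type u} [Category.{v} C] [Preadditive C] [HasZeroObject C]
  [HasShift C ℤ] [∀ n : ℤ, (shiftFunctor C n).Additive] [Pretriangulated C]

/-- Auxiliary vanishing: a map from an object isomorphic to `A'⟦-1⟧` with `A' ∈ C_{w≤0}`
to an object `Q` with `Q⟦1⟧ ∈ C_{w≥1}` vanishes. -/
lemma WeightStructure.vanish_aux (w : WeightStructure C) {P Q : C} (A' : C) (hA : A' ∈ w.le)
    (eP : P ≅ A'⟦(-1:ℤ)⟧) (hQ : Q⟦(1:ℤ)⟧ ∈ shiftedSet w.ge 1) (f : P ⟶ Q) : f = 0 := by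
  set e : A'⟦(-1:ℤ)⟧⟦(1:ℤ)⟧ ≅ A' := (shiftFunctorCompIsoId C (-1:ℤ) 1 (by norm_num)).app A'
  have h0 : e.inv ≫ (shiftFunctor C (1:ℤ)).map (eP.inv ≫ f) = 0 :=
    w.orth A' (Q⟦(1:ℤ)⟧) hA hQ _
  have h1 : (shiftFunctor C (1:ℤ)).map (eP.inv ≫ f) = 0 := by
    have := congrArg (fun g => e.hom ≫ g) h0
    simpa using this
  have h2 : eP.inv ≫ f = 0 := (shiftFunctor C (1:ℤ)).map_injective (by simpa using h1)
  have := congrArg (fun g => eP.hom ≫ g) h2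
  simpa using this

end Aux

/-- For `M` of weights `≥ 0` admitting a weight filtration avoiding weight `1`, the
weight-zero subobject `Gr₀ M := M_{≤ 0}` lies in the heart and is universal among morphisms
from objects of the heart to `M`. -/
theorem gr0_right_adjoint
    {C : Type u} [Category.{v} C] [Preadditive C] [HasZeroObject C]
    [HasShift C ℤ] [∀ n : ℤ, (shiftFunctor C n).Additive] [Pretriangulated C]
    (w : WeightStructure C) (M : C) (hM : M ∈ w.ge)
    (G B : C) (ι : G ⟶ M) (b : M ⟶ B) (δ : B ⟶ G⟦(1:ℤ)⟧)
    (hT : Triangle.mk ι b δ ∈ distTriang C)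
    (hG : G ∈ w.le) (hB : B ∈ w.wGE 2) :
    G ∈ w.heart ∧
      ∀ N : C, N ∈ w.heart → Function.Bijective (fun g : N ⟶ G => g ≫ ι) := by
  obtain ⟨B'', hB'', ⟨eB⟩⟩ := hB
  -- `B''⟦1⟧ ∈ ge`
  have hB1 : B''⟦(1:ℤ)⟧ ∈ w.ge := w.ge_shift ⟨B'', hB'', ⟨Iso.refl _⟩⟩
  -- `B ∈ shiftedSet ge 1`
  have hBge1 : B ∈ shiftedSet w.ge 1 :=
    ⟨B''⟦(1:ℤ)⟧, hB1, ⟨eB ≪≫ (shiftFunctorAdd' C 1 1 2 (by norm_num)).app B''⟩⟩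
  -- `B⟦-1⟧ ∈ shiftedSet ge 1`
  have hBm1 : B⟦(-1:ℤ)⟧ ∈ shiftedSet w.ge 1 :=
    ⟨B'', hB'', ⟨(shiftFunctor C (-1:ℤ)).mapIso eB ≪≫
      ((shiftFunctorAdd' C 2 (-1) 1 (by norm_num)).app B'').symm⟩⟩
  -- `(B⟦-1⟧)⟦1⟧ ∈ shiftedSet ge 1`
  have hBm1s : (B⟦(-1:ℤ)⟧)⟦(1:ℤ)⟧ ∈ shiftedSet w.ge 1 :=
    ⟨B''⟦(1:ℤ)⟧, hB1,
      ⟨(shiftFunctorCompIsoId C (-1:ℤ) 1 (by norm_num)).app B ≪≫ eB ≪≫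
        (shiftFunctorAdd' C 1 1 2 (by norm_num)).app B''⟩⟩
  -- the inverse rotation of the given triangle
  set T : Triangle C := Triangle.mk ι b δ
  have hT' : T.invRotate ∈ distTriang C := inv_rot_of_distTriang T hT
  -- Step 1: every map `A'⟦-1⟧ → G` (and more generally from any object iso to such) vanishes
  have step1 : ∀ (A' : C), A' ∈ w.le → ∀ f : A'⟦(-1:ℤ)⟧ ⟶ G, f = 0 := by
    intro A' hA f
    have hfι : f ≫ ι = 0 :=
      w.vanish_aux A' hA (Iso.refl _) ⟨M, hM, ⟨Iso.refl _⟩⟩ (f ≫ ι)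
    obtain ⟨g, hg⟩ := Triangle.coyoneda_exact₂ T.invRotate hT' f hfι
    have hg0 : g = 0 := w.vanish_aux A' hA (Iso.refl _) hBm1s g
    rw [hg, hg0, zero_comp]
    rfl
  -- Step 2: `G ∈ ge`
  have hGge : G ∈ w.ge := by
    obtain ⟨A, B₁, a, b₁, δ₁, hT₁, hA, hB₁⟩ := w.exists_wf (G⟦(1:ℤ)⟧)
    -- the map `a : A ⟶ G⟦1⟧` vanishes
    have ha : a = 0 := by
      set e : G⟦(1:ℤ)⟧⟦(-1:ℤ)⟧ ≅ G := (shiftFunctorCompIsoId C (1:ℤ) (-1) (by norm_num)).app G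
      have h0 : (shiftFunctor C (-1:ℤ)).map a ≫ e.hom = 0 := step1 A hA _
      have h1 : (shiftFunctor C (-1:ℤ)).map a = 0 := by
        have := congrArg (fun g => g ≫ e.inv) h0
        simpa using this
      exact (shiftFunctor C (-1:ℤ)).map_injective (by simpa using h1)
    -- hence `G⟦1⟧` is a retract of `B₁`
    obtain ⟨r, hr⟩ := Triangle.yoneda_exact₂ _ hT₁ (𝟙 (G⟦(1:ℤ)⟧)) (by
      show a ≫ _ = 0; rw [ha, zero_comp])
    change B₁ ⟶ G⟦(1:ℤ)⟧ at r
    obtain ⟨B₂, hB₂, ⟨e₂⟩⟩ := hB₁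
    -- so `G` is a retract of `B₂ ∈ ge`
    set η : G⟦(1:ℤ)⟧⟦(-1:ℤ)⟧ ≅ G := (shiftFunctorCompIsoId C (1:ℤ) (-1) (by norm_num)).app G
    set η₂ : B₂⟦(1:ℤ)⟧⟦(-1:ℤ)⟧ ≅ B₂ :=
      (shiftFunctorCompIsoId C (1:ℤ) (-1) (by norm_num)).app B₂
    refine w.retract_ge G B₂
      (η.inv ≫ (shiftFunctor C (-1:ℤ)).map (b₁ ≫ e₂.hom) ≫ η₂.hom)
      (η₂.inv ≫ (shiftFunctor C (-1:ℤ)).map (e₂.inv ≫ r) ≫ η.hom) ?_ hB₂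
    have hbr : b₁ ≫ r = 𝟙 (G⟦(1:ℤ)⟧) := hr.symm
    simp only [Category.assoc, Iso.hom_inv_id_assoc, ← Functor.map_comp,
      ← Functor.map_comp_assoc]
    rw [hbr]; simp
  refine ⟨⟨hG, hGge⟩, ?_⟩
  -- Part (ii)
  intro N hN
  constructor
  · intro g₁ g₂ h
    have hd : (g₁ - g₂) ≫ ι = 0 := by
      simp only at h
      rw [Preadditive.sub_comp, h, sub_self]
    obtain ⟨g, hg⟩ := Triangle.coyoneda_exact₂ T.invRotate hT' (g₁ - g₂) hd
    have hg0 : g = 0 := w.orth N _ hN.1 hBm1 g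
    rw [hg0, zero_comp] at hg
    exact sub_eq_zero.mp hg
  · intro f
    have hfb : f ≫ b = 0 := w.orth N B hN.1 hBge1 (f ≫ b)
    obtain ⟨g, hg⟩ := Triangle.coyoneda_exact₂ T hT f hfb
    exact ⟨g, hg.symm⟩
end
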